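/- arXiv:math/0502061 — 4 statements merged into one kernel-verified Lean document; each statement's English description precedes it below -/
import Mathlib

section
/- Let $\Delta > 1$ and $\nu \ge 1$ be integers, $R_0(t;\nu) = \frac{(\nu\Delta)!}{(\nu\Delta-\nu)!}\prod_{\kappa=\nu+1}^{\nu\Delta}(t-\kappa)\prod_{\kappa=0}^{\nu\Delta}(t+\kappa)^{-1}$, and $\alpha^*_{\nu,k} = (-1)^{\nu+\nu\Delta+k}\binom{\nu\Delta}{k}^3\binom{\nu\Delta+k}{\nu\Delta-\nu}^3$. Then for each $k \in \{0,\ldots,\nu\Delta\}$, $\lim_{t\to -k}\frac{d}{dt}\big(R_0(t;\nu)^3(t+k)^3\big) = 3\,\alpha^*_{\nu,k}\Big(-\sum_{\kappa=\nu+k+1}^{\nu\Delta+k}\kappa^{-1} - \sum_{\kappa=1}^{\nu\Delta-k}\kappa^{-1} + \sum_{\kappa=1}^{k}\kappa^{-1}\Big)$. -/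
open Filter Finset

private lemma fact_prod_Icc' (a : ℕ) : ∀ b, a ≤ b →
    a.factorial * ∏ x ∈ Icc (a+1) b, x = b.factorial := by
  intro b
  induction b with
  | zero => intro h; interval_cases a; simp
  | succ n ih =>
    intro h
    rcases Nat.lt_or_ge n a with h1 | h1
    · have : a = n + 1 := by omega
      subst this; simp
    · rw [Finset.prod_Icc_succ_top (by omega), ← mul_assoc, ih h1, Nat.factorial_succ, mul_comm]

private lemma sum_shiftR' (a b c : ℕ) (f : ℕ → ℝ) :
    ∑ j ∈ Icc (a+c) (b+c), f j = ∑ κ ∈ Icc a b, f (κ + c) := by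
  rw [← Finset.map_add_right_Icc, Finset.sum_map]; rfl

private lemma prod_shiftR' (a b c : ℕ) (f : ℕ → ℝ) :
    ∏ j ∈ Icc (a+c) (b+c), f j = ∏ κ ∈ Icc a b, f (κ + c) := by
  rw [← Finset.map_add_right_Icc, Finset.prod_map]; rfl

private lemma L1' (ν m k : ℕ) :
    ∑ κ ∈ Icc (ν+1) m, ((k:ℝ)+κ)⁻¹ = ∑ κ ∈ Icc (ν+k+1) (m+k), (κ:ℝ)⁻¹ := by
  rw [show ν+k+1 = (ν+1)+k by ring, sum_shiftR']
  exact Finset.sum_congr rfl fun κ _ => by push_cast; ring_nf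

private lemma L2' (m k : ℕ) (h : k ≤ m) :
    ∑ κ ∈ Icc (k+1) m, ((κ:ℝ)-k)⁻¹ = ∑ j ∈ Icc 1 (m-k), (j:ℝ)⁻¹ := by
  rw [show m = (m-k)+k by omega, show k+1 = 1+k by ring, sum_shiftR',
    show (m-k)+k-k = m-k by omega]
  exact Finset.sum_congr rfl fun κ _ => by push_cast; ring_nf

private lemma L3' (k : ℕ) : ∑ κ ∈ range k, ((κ:ℝ)-k)⁻¹ = -∑ j ∈ Icc 1 k, (j:ℝ)⁻¹ := by
  rw [← Finset.sum_range_reflect, ← Finset.Ico_add_one_right_eq_Icc, Finset.sum_Ico_eq_sum_range,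
    ← Finset.sum_neg_distrib]
  simp only [Nat.add_sub_cancel, Nat.succ_sub_one]
  refine Finset.sum_congr rfl fun j hj => ?_
  simp only [Finset.mem_range] at hj
  have h1 : (((k-1-j : ℕ)):ℝ) = k - 1 - j := by
    push_cast [Nat.cast_sub (by omega : j ≤ k-1), Nat.cast_sub (by omega : 1 ≤ k)]; ring
  rw [h1]
  push_cast
  rw [show (k:ℝ)-1-j-k = -(1+j) by ring, inv_neg]

private lemma P1' (ν m k : ℕ) (h : ν ≤ m) :
    ∏ κ ∈ Icc (ν+1) m, ((k:ℝ)+κ) = ((m+k).factorial : ℝ) / ((ν+k).factorial : ℝ) := by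
  have key := fact_prod_Icc' (ν+k) (m+k) (by omega)
  have key2 : ((ν+k).factorial : ℝ) * ((∏ x ∈ Icc (ν+k+1) (m+k), x : ℕ) : ℝ) = ((m+k).factorial : ℝ) := by
    exact_mod_cast key
  rw [Nat.cast_prod, show ν+k+1 = (ν+1)+k by ring, prod_shiftR'] at key2
  have h3 : ∏ κ ∈ Icc (ν+1) m, ((κ+k : ℕ):ℝ) = ∏ κ ∈ Icc (ν+1) m, ((k:ℝ)+κ) :=
    Finset.prod_congr rfl fun κ _ => by push_cast; ring
  rw [h3] at key2
  field_simp [← key2]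
  linarith [key2]

private lemma P2' (m k : ℕ) (h : k ≤ m) :
    ∏ κ ∈ Icc (k+1) m, ((κ:ℝ)-k) = ((m-k).factorial : ℝ) := by
  rw [show m = (m-k)+k by omega, show k+1 = 1+k by ring, prod_shiftR',
    show (m-k)+k-k = m-k by omega]
  have key := fact_prod_Icc' 0 (m-k) (Nat.zero_le _)
  simp only [Nat.factorial_zero, one_mul, zero_add] at key
  rw [← key]
  push_cast
  exact Finset.prod_congr rfl fun κ _ => by norm_num

private lemma P3' (k : ℕ) : ∏ κ ∈ range k, ((κ:ℝ)-k) = (-1)^k * (k.factorial : ℝ) := by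
  have h1 : ∏ κ ∈ range k, ((κ:ℝ)-k) = (-1)^k * ∏ κ ∈ range k, ((k:ℝ)-κ) := by
    calc ∏ κ ∈ range k, ((κ:ℝ)-k) = ∏ κ ∈ range k, (-1) * ((k:ℝ)-κ) :=
          Finset.prod_congr rfl (by intros; ring)
      _ = _ := by rw [Finset.prod_mul_distrib, Finset.prod_const, Finset.card_range]
  rw [h1, ← Finset.prod_range_reflect]
  congr 1
  have : ∀ j ∈ range k, (k:ℝ) - (k-1-j : ℕ) = ((j+1 : ℕ):ℝ) := by
    intro j hj; simp only [Finset.mem_range] at hj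
    push_cast [Nat.cast_sub (by omega : j ≤ k - 1), Nat.cast_sub (by omega : 1 ≤ k)]; ring
  rw [Finset.prod_congr rfl this]
  norm_cast
  exact Finset.prod_range_add_one_eq_factorial k

private lemma split_s2 (m k : ℕ) (hk : k ≤ m) :
    (Finset.range (m+1)).erase k = range k ∪ Icc (k+1) m := by
  ext a
  simp only [Finset.mem_erase, Finset.mem_range, Finset.mem_union, Finset.mem_Icc]
  omega

private lemma disj_s2 (m k : ℕ) : Disjoint (range k) (Icc (k+1) m) := by
  rw [Finset.disjoint_left]
  intro a ha hb
  simp only [Finset.mem_range] at ha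
  simp only [Finset.mem_Icc] at hb
  omega

private lemma cube_neg_one (e : ℕ) : ((-1:ℝ)^e)^3 = (-1)^e := by
  rcases Nat.even_or_odd e with he | he
  · rw [he.neg_one_pow]; norm_num
  · rw [he.neg_one_pow]; norm_num

/-- The coefficient `β*_{ν,k}` of `(t+k)⁻²` in the partial fraction expansion of `R₀(t;ν)³`. -/
theorem R0_cube_beta_coeff (Δ ν : ℕ) (hΔ : 1 < Δ) (hν : 1 ≤ ν)
    (R₀ : ℝ → ℝ)
    (hR : ∀ t : ℝ, R₀ t = ((ν * Δ).factorial : ℝ) / ((ν * Δ - ν).factorial : ℝ) *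
      (∏ κ ∈ Finset.Icc (ν + 1) (ν * Δ), (t - (κ : ℝ))) *
      (∏ κ ∈ Finset.range (ν * Δ + 1), (t + (κ : ℝ))⁻¹))
    (k : ℕ) (hk : k ≤ ν * Δ) :
    Tendsto (deriv fun t : ℝ => (R₀ t) ^ 3 * (t + (k : ℝ)) ^ 3)
      (nhdsWithin (-(k : ℝ)) {(-(k : ℝ))}ᶜ)
      (nhds (3 * ((-1 : ℝ) ^ (ν + ν * Δ + k) *
          ((ν * Δ).choose k : ℝ) ^ 3 * ((ν * Δ + k).choose (ν * Δ - ν) : ℝ) ^ 3) *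
        (-(∑ κ ∈ Finset.Icc (ν + k + 1) (ν * Δ + k), (κ : ℝ)⁻¹) -
          (∑ κ ∈ Finset.Icc 1 (ν * Δ - k), (κ : ℝ)⁻¹) +
          (∑ κ ∈ Finset.Icc 1 k, (κ : ℝ)⁻¹)))) := by
  set m := ν * Δ with hm
  have hνm : ν ≤ m := Nat.le_mul_of_pos_right ν (by omega)
  set x₀ : ℝ := -(k : ℝ) with hx₀
  set s₁ : Finset ℕ := Icc (ν+1) m with hs₁
  set s₂ : Finset ℕ := (range (m+1)).erase k with hs₂
  set C : ℝ := (m.factorial : ℝ) / ((m-ν).factorial : ℝ) with hC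
  set F : ℝ → ℝ := fun t => ∏ κ ∈ s₁, (t - (κ:ℝ)) with hF
  set G : ℝ → ℝ := fun t => ∏ κ ∈ s₂, (t + (κ:ℝ)) with hG
  set h : ℝ → ℝ := fun t => C * F t / G t with hh
  have hCne : C ≠ 0 := by
    rw [hC]
    positivity
  have hGx : G x₀ ≠ 0 := by
    rw [hG]
    apply Finset.prod_ne_zero_iff.2
    intro κ hκ
    simp only [hs₂, Finset.mem_erase] at hκ
    have : (κ:ℝ) ≠ (k:ℝ) := by exact_mod_cast hκ.1
    rw [hx₀]; intro hcon; apply this; linarith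
  have hFx : F x₀ ≠ 0 := by
    rw [hF]
    apply Finset.prod_ne_zero_iff.2
    intro κ hκ
    simp only [hs₁, Finset.mem_Icc] at hκ
    have : (0:ℝ) < (k:ℝ) + κ := by
      have : (1:ℝ) ≤ (κ:ℝ) := by exact_mod_cast (by omega : 1 ≤ κ)
      have : (0:ℝ) ≤ (k:ℝ) := Nat.cast_nonneg k
      linarith
    rw [hx₀]; intro hcon; linarith
  have hhx : h x₀ ≠ 0 := by
    rw [hh]; exact div_ne_zero (mul_ne_zero hCne hFx) hGx
  -- derivative data
  set F' : ℝ → ℝ := fun t => ∑ i ∈ s₁, ∏ j ∈ s₁.erase i, (t - (j:ℝ)) with hF'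
  set G' : ℝ → ℝ := fun t => ∑ i ∈ s₂, ∏ j ∈ s₂.erase i, (t + (j:ℝ)) with hG'
  have hFd : ∀ t : ℝ, HasDerivAt F (F' t) t := by
    intro t
    have := HasDerivAt.fun_finsetProd (u := s₁) (𝕜 := ℝ) (x := t)
      (f := fun i s => s - (i:ℝ)) (f' := fun _ => (1:ℝ))
      (fun i _ => (hasDerivAt_id t).sub_const _)
    simpa [smul_eq_mul] using this
  have hGd : ∀ t : ℝ, HasDerivAt G (G' t) t := by
    intro t
    have := HasDerivAt.fun_finsetProd (u := s₂) (𝕜 := ℝ) (x := t)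
      (f := fun i s => s + (i:ℝ)) (f' := fun _ => (1:ℝ))
      (fun i _ => (hasDerivAt_id t).add_const _)
    simpa [smul_eq_mul] using this
  have hhd : ∀ t : ℝ, G t ≠ 0 →
      HasDerivAt h ((C * F' t * G t - C * F t * G' t) / (G t)^2) t := by
    intro t ht
    exact ((hFd t).const_mul C).div (hGd t) ht
  set φ : ℝ → ℝ := fun t => 3 * (h t)^2 * ((C * F' t * G t - C * F t * G' t) / (G t)^2) with hφ
  have hh3d : ∀ t : ℝ, G t ≠ 0 → HasDerivAt (fun s => h s ^ 3) (φ t) t := by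
    intro t ht
    have h3 := (hhd t ht).pow 3
    have he : φ t = (3:ℕ) * h t ^ (3-1) * ((C * F' t * G t - C * F t * G' t) / (G t)^2) := by
      rw [hφ]; push_cast; ring
    rw [he]
    exact h3
  -- continuity
  have hFc : Continuous F := continuous_finset_prod _ fun i _ => continuous_id.sub continuous_const
  have hGc : Continuous G := continuous_finset_prod _ fun i _ => continuous_id.add continuous_const
  have hF'c : Continuous F' := continuous_finset_sum _ fun i _ =>
    continuous_finset_prod _ fun j _ => continuous_id.sub continuous_const
  have hG'c : Continuous G' := continuous_finset_sum _ fun i _ =>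
    continuous_finset_prod _ fun j _ => continuous_id.add continuous_const
  have hhc : ContinuousAt h x₀ :=
    ((continuousAt_const.mul hFc.continuousAt).div hGc.continuousAt hGx)
  have hφc : ContinuousAt φ x₀ := by
    apply (continuousAt_const.mul (hhc.pow 2)).mul
    exact (((continuousAt_const.mul hF'c.continuousAt).mul hGc.continuousAt).sub
      ((continuousAt_const.mul hFc.continuousAt).mul hG'c.continuousAt)).div
      (hGc.continuousAt.pow 2) (pow_ne_zero _ hGx)
  -- the function in question agrees with h^3 away from poles
  set f : ℝ → ℝ := fun t : ℝ => (R₀ t) ^ 3 * (t + (k : ℝ)) ^ 3 with hf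
  set E : Finset ℝ := Finset.image (fun κ : ℕ => -(κ:ℝ)) s₂ with hE
  have hUopen : IsOpen ((↑E : Set ℝ)ᶜ) := E.finite_toSet.isClosed.isOpen_compl
  have hx₀U : x₀ ∈ ((↑E : Set ℝ)ᶜ) := by
    intro hmem
    rw [hE] at hmem
    simp only [Finset.coe_image, Set.mem_image, Finset.mem_coe] at hmem
    obtain ⟨κ, hκ, hκ2⟩ := hmem
    rw [hs₂, Finset.mem_erase] at hκ
    apply hκ.1
    have : (κ:ℝ) = (k:ℝ) := by rw [hx₀] at hκ2; linarith
    exact_mod_cast this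
  have key : ∀ t : ℝ, t ∈ ((↑E : Set ℝ)ᶜ) → t ≠ x₀ → f t = h t ^ 3 := by
    intro t htU htx
    have ht' : ∀ κ ∈ range (m+1), t + (κ:ℝ) ≠ 0 := by
      intro κ hκ h0
      by_cases hκk : κ = k
      · subst hκk
        exact htx (by rw [hx₀]; linarith)
      · apply htU
        rw [hE]
        simp only [Finset.coe_image, Set.mem_image, Finset.mem_coe]
        exact ⟨κ, by rw [hs₂, Finset.mem_erase]; exact ⟨hκk, hκ⟩, by linarith⟩
    have hkmem : k ∈ range (m+1) := by simp only [Finset.mem_range]; omega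
    have hGt : G t ≠ 0 := by
      rw [hG]
      apply Finset.prod_ne_zero_iff.2
      intro κ hκ
      exact ht' κ (Finset.mem_of_mem_erase hκ)
    have htk : t + (k:ℝ) ≠ 0 := ht' k hkmem
    have hsplit : ∏ κ ∈ range (m+1), (t + (κ:ℝ)) = (t + (k:ℝ)) * G t := by
      rw [hG]
      exact (Finset.mul_prod_erase _ _ hkmem).symm
    have hR1 : R₀ t * (t + (k:ℝ)) = h t := by
      show _ = C * F t / G t
      have hFt : F t = ∏ κ ∈ s₁, (t - (κ:ℝ)) := rfl
      rw [hR t, Finset.prod_inv_distrib, hsplit, hFt]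
      field_simp
    show R₀ t ^ 3 * (t + (k:ℝ)) ^ 3 = h t ^ 3
    rw [← mul_pow, hR1]
  -- eventual equality of derivatives
  have hev1 : deriv f =ᶠ[nhdsWithin x₀ {x₀}ᶜ] deriv (fun s => h s ^ 3) := by
    have hU : ((↑E : Set ℝ)ᶜ) ∈ nhdsWithin x₀ {x₀}ᶜ :=
      nhdsWithin_le_nhds (hUopen.mem_nhds hx₀U)
    filter_upwards [hU, self_mem_nhdsWithin] with t htU htx
    have hmem : ((↑E : Set ℝ)ᶜ ∩ {x₀}ᶜ) ∈ nhds t :=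
      (hUopen.inter isOpen_compl_singleton).mem_nhds ⟨htU, htx⟩
    apply Filter.EventuallyEq.deriv_eq
    filter_upwards [hmem] with s hs
    exact key s hs.1 hs.2
  have hev2 : deriv (fun s => h s ^ 3) =ᶠ[nhds x₀] φ := by
    have hV : {t : ℝ | G t ≠ 0} ∈ nhds x₀ :=
      (hGc.isOpen_preimage {(0:ℝ)}ᶜ isOpen_compl_singleton).mem_nhds hGx
    filter_upwards [hV] with t ht
    exact (hh3d t ht).deriv
  have Tφ : Tendsto φ (nhdsWithin x₀ {x₀}ᶜ) (nhds (φ x₀)) :=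
    hφc.tendsto.mono_left nhdsWithin_le_nhds
  have Tf : Tendsto (deriv f) (nhdsWithin x₀ {x₀}ᶜ) (nhds (φ x₀)) :=
    Tφ.congr' ((hev1.trans (hev2.filter_mono nhdsWithin_le_nhds)).symm)
  -- now compute φ x₀
  have hq : deriv h x₀ = (C * F' x₀ * G x₀ - C * F x₀ * G' x₀) / (G x₀)^2 := (hhd x₀ hGx).deriv
  have hφx : φ x₀ = 3 * h x₀ ^ 3 * logDeriv h x₀ := by
    show 3 * h x₀ ^ 2 * ((C * F' x₀ * G x₀ - C * F x₀ * G' x₀) / (G x₀)^2) =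
      3 * h x₀ ^ 3 * logDeriv h x₀
    rw [logDeriv_apply, hq]
    field_simp
  -- the logarithmic derivative
  have hlogF : logDeriv F x₀ = ∑ κ ∈ s₁, (x₀ - (κ:ℝ))⁻¹ := by
    rw [hF]
    have := logDeriv_prod (s := s₁) (f := fun (i : ℕ) (t : ℝ) => t - (i:ℝ)) (x := x₀)
      (fun i hi => by
        show x₀ - (i:ℝ) ≠ 0
        rw [hs₁, Finset.mem_Icc] at hi
        have h1 : (1:ℝ) ≤ (i:ℝ) := by exact_mod_cast (by omega : 1 ≤ i)
        have h2 : (0:ℝ) ≤ (k:ℝ) := Nat.cast_nonneg k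
        rw [hx₀, sub_ne_zero]
        intro hcon
        rw [← hcon] at h1
        linarith)
      (fun i _ => ((hasDerivAt_id x₀).sub_const _).differentiableAt)
    rw [this]
    refine Finset.sum_congr rfl fun i _ => ?_
    show logDeriv (fun t : ℝ => t - (i:ℝ)) x₀ = (x₀ - (i:ℝ))⁻¹
    rw [logDeriv_apply, deriv_sub_const]
    simp [one_div]
  have hlogG : logDeriv G x₀ = ∑ κ ∈ s₂, (x₀ + (κ:ℝ))⁻¹ := by
    rw [hG]
    have := logDeriv_prod (s := s₂) (f := fun (i : ℕ) (t : ℝ) => t + (i:ℝ)) (x := x₀)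
      (fun i hi => by
        show x₀ + (i:ℝ) ≠ 0
        rw [hs₂, Finset.mem_erase] at hi
        have h2 : (i:ℝ) ≠ (k:ℝ) := by exact_mod_cast hi.1
        rw [hx₀]
        intro hcon
        exact h2 (by linarith))
      (fun i _ => ((hasDerivAt_id x₀).add_const _).differentiableAt)
    rw [this]
    refine Finset.sum_congr rfl fun i _ => ?_
    show logDeriv (fun t : ℝ => t + (i:ℝ)) x₀ = (x₀ + (i:ℝ))⁻¹
    rw [logDeriv_apply, deriv_add_const]
    simp [one_div]
  have hlog : logDeriv h x₀ =
      -(∑ κ ∈ Icc (ν + k + 1) (m + k), (κ : ℝ)⁻¹) -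
        (∑ κ ∈ Icc 1 (m - k), (κ : ℝ)⁻¹) + (∑ κ ∈ Icc 1 k, (κ : ℝ)⁻¹) := by
    have hstep : logDeriv h x₀ = logDeriv (fun z => C * F z) x₀ - logDeriv G x₀ := by
      rw [hh]
      exact logDeriv_div _ (mul_ne_zero hCne hFx) hGx
        (((hFd x₀).differentiableAt).const_mul _) (hGd x₀).differentiableAt
    have hconst : logDeriv (fun z => C * F z) x₀ = logDeriv F x₀ :=
      logDeriv_const_mul x₀ C hCne
    have hsum1 : ∑ κ ∈ s₁, (x₀ - (κ:ℝ))⁻¹ =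
        -(∑ κ ∈ Icc (ν + k + 1) (m + k), (κ : ℝ)⁻¹) := by
      rw [← L1' ν m k, ← Finset.sum_neg_distrib]
      refine Finset.sum_congr rfl fun κ _ => ?_
      rw [hx₀, show -(k:ℝ) - κ = -((k:ℝ)+κ) by ring, inv_neg]
    have hsum2 : ∑ κ ∈ s₂, (x₀ + (κ:ℝ))⁻¹ =
        -(∑ κ ∈ Icc 1 k, (κ : ℝ)⁻¹) + ∑ κ ∈ Icc 1 (m-k), (κ : ℝ)⁻¹ := by
      have hterm : ∀ κ : ℕ, x₀ + (κ:ℝ) = (κ:ℝ) - k := fun κ => by rw [hx₀]; ring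
      simp only [hterm]
      rw [hs₂, split_s2 m k hk, Finset.sum_union (disj_s2 m k), L3' k, L2' m k hk]
    rw [hstep, hconst, hlogF, hlogG, hsum1, hsum2]
    ring
  -- the value h x₀
  have cards₁ : s₁.card = m - ν := by rw [hs₁, Nat.card_Icc]; omega
  have hFx₀ : F x₀ = (-1:ℝ)^(m-ν) * (((m+k).factorial : ℝ) / ((ν+k).factorial : ℝ)) := by
    have hFr : F x₀ = ∏ κ ∈ s₁, (x₀ - (κ:ℝ)) := rfl
    rw [hFr]
    have : ∀ κ ∈ s₁, x₀ - (κ:ℝ) = (-1) * ((k:ℝ) + κ) := fun κ _ => by rw [hx₀]; ring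
    rw [Finset.prod_congr rfl this, Finset.prod_mul_distrib, Finset.prod_const, cards₁,
      P1' ν m k hνm]
  have hGx₀ : G x₀ = ((-1:ℝ)^k * (k.factorial : ℝ)) * ((m-k).factorial : ℝ) := by
    have hGr : G x₀ = ∏ κ ∈ s₂, (x₀ + (κ:ℝ)) := rfl
    rw [hGr]
    have hterm : ∀ κ ∈ s₂, x₀ + (κ:ℝ) = (κ:ℝ) - k := fun κ _ => by rw [hx₀]; ring
    rw [Finset.prod_congr rfl hterm, hs₂, split_s2 m k hk,
      Finset.prod_union (disj_s2 m k), P3' k, P2' m k hk]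
  have hsgn : ((-1:ℝ))^(ν+m+k) * (-1:ℝ)^k = (-1:ℝ)^(m-ν) := by
    rw [← pow_add, show ν+m+k+k = (m-ν)+2*(ν+k) by omega, pow_add, pow_mul]
    norm_num
  have hhx₀ : h x₀ = (-1:ℝ)^(ν+m+k) * (m.choose k : ℝ) * ((m+k).choose (m-ν) : ℝ) := by
    show C * F x₀ / G x₀ = _
    rw [hFx₀, hGx₀, hC, Nat.cast_choose ℝ hk, Nat.cast_choose ℝ (show m-ν ≤ m+k by omega),
      show (m+k)-(m-ν) = ν+k by omega, ← hsgn]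
    have f1 : ((m-ν).factorial : ℝ) ≠ 0 := Nat.cast_ne_zero.2 (Nat.factorial_ne_zero _)
    have f2 : ((ν+k).factorial : ℝ) ≠ 0 := Nat.cast_ne_zero.2 (Nat.factorial_ne_zero _)
    have f3 : ((m-k).factorial : ℝ) ≠ 0 := Nat.cast_ne_zero.2 (Nat.factorial_ne_zero _)
    have f4 : (k.factorial : ℝ) ≠ 0 := Nat.cast_ne_zero.2 (Nat.factorial_ne_zero _)
    have f5 : ((-1:ℝ))^k ≠ 0 := pow_ne_zero _ (by norm_num)
    field_simp
  have hcube : h x₀ ^ 3 = (-1:ℝ)^(ν+m+k) * (m.choose k : ℝ)^3 * ((m+k).choose (m-ν) : ℝ)^3 := by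
    rw [hhx₀, mul_pow, mul_pow, cube_neg_one]
  have hval : φ x₀ = 3 * ((-1 : ℝ) ^ (ν + m + k) *
      ((m).choose k : ℝ) ^ 3 * ((m + k).choose (m - ν) : ℝ) ^ 3) *
      (-(∑ κ ∈ Finset.Icc (ν + k + 1) (m + k), (κ : ℝ)⁻¹) -
        (∑ κ ∈ Finset.Icc 1 (m - k), (κ : ℝ)⁻¹) +
        (∑ κ ∈ Finset.Icc 1 k, (κ : ℝ)⁻¹)) := by
    rw [hφx, hcube, hlog]
  rw [← hval]
  exact Tf
end

section
/- Let $\Delta > 1$, $\nu \ge 1$ be integers, $d_1 = \Delta - 1$, and let $R_0(t;\nu) = \frac{(\nu\Delta)!}{(\nu\Delta-\nu)!}\prod_{\kappa=\nu+1}^{\nu\Delta}(t-\kappa)\prod_{\kappa=0}^{\nu\Delta}(t+\kappa)^{-1}$. For real $z > 1$ define $f_2^*(z,\nu) = (-z)^{\nu}\sum_{t=\nu+1}^{\infty} z^{-t} R_0(t;\nu)^3$. Then the series converges absolutely and $f_2^*(z,\nu) = \alpha^*(z;\nu)\,\mathrm{Li}_3(1/z) + \beta^*(z;\nu)\,\mathrm{Li}_2(1/z)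 - \gamma^*(z;\nu)\log(1-1/z) - \phi^*(z;\nu)$, where $\alpha^*(z;\nu) = (-z)^{\nu}\sum_{k=0}^{\nu\Delta}\alpha^*_{\nu,k}z^k$, $\beta^*(z;\nu) = (-z)^{\nu}\sum_{k=0}^{\nu\Delta}\beta^*_{\nu,k}z^k$, $\gamma^*(z;\nu) = (-z)^{\nu}\sum_{k=0}^{\nu\Delta}\gamma^*_{\nu,k}z^k$, and $\phi^*(z;\nu) = (-z)^{\nu}\sum_{k=0}^{\nu\Delta}z^k\sum_{t=1}^{k+\nu}z^{-t}\big(\alpha^*_{\nu,k}t^{-3}+\beta^*_{\nu,k}t^{-2}+\gamma^*_{\nu,k}t^{-1}\big)$. -/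
/-- The polylogarithm `Li n w = ∑_{t ≥ 1} wᵗ t⁻ⁿ`. -/
noncomputable def Li (n : ℕ) (w : ℝ) : ℝ := ∑' t : ℕ, w ^ (t + 1) / ((t + 1 : ℕ) : ℝ) ^ n


lemma summable_Li {w : ℝ} (h0 : 0 ≤ w) (h1 : w < 1) (m : ℕ) :
    Summable (fun t : ℕ => w ^ (t + 1) / ((t + 1 : ℕ) : ℝ) ^ m) := by
  apply Summable.of_nonneg_of_le (fun t => by positivity) (fun t => ?_)
    ((summable_geometric_of_lt_one h0 h1).mul_right w)
  have h1t : (1 : ℝ) ≤ ((t + 1 : ℕ) : ℝ) ^ m :=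
    one_le_pow₀ (by exact_mod_cast Nat.one_le_iff_ne_zero.mpr (by omega))
  calc w ^ (t + 1) / ((t + 1 : ℕ) : ℝ) ^ m ≤ w ^ (t + 1) := div_le_self (by positivity) h1t
    _ = w ^ t * w := by rw [pow_succ]

lemma tail_summable {w : ℝ} (h0 : 0 ≤ w) (h1 : w < 1) (m j : ℕ) :
    Summable (fun n : ℕ => w ^ (j + 1 + n) / ((j + 1 + n : ℕ) : ℝ) ^ m) := by
  have h := (summable_nat_add_iff (f := fun t : ℕ => w ^ (t + 1) / ((t + 1 : ℕ) : ℝ) ^ m) j).mpr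
    (summable_Li h0 h1 m)
  refine h.congr (fun n => ?_)
  show w ^ (n + j + 1) / ((n + j + 1 : ℕ) : ℝ) ^ m = _
  rw [show n + j + 1 = j + 1 + n from by omega]

lemma tail_eq {w : ℝ} (h0 : 0 ≤ w) (h1 : w < 1) (m j : ℕ) :
    ∑' n : ℕ, w ^ (j + 1 + n) / ((j + 1 + n : ℕ) : ℝ) ^ m
      = Li m w - ∑ s ∈ Finset.Icc 1 j, w ^ s / ((s : ℕ) : ℝ) ^ m := by
  have hs := summable_Li h0 h1 m
  have key := Summable.sum_add_tsum_nat_add (f := fun t : ℕ => w ^ (t + 1) / ((t + 1 : ℕ) : ℝ) ^ m) j hs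
  have e1 : ∑' n : ℕ, w ^ (j + 1 + n) / ((j + 1 + n : ℕ) : ℝ) ^ m
      = ∑' n : ℕ, w ^ (n + j + 1) / ((n + j + 1 : ℕ) : ℝ) ^ m := by
    apply tsum_congr; intro n
    rw [show j + 1 + n = n + j + 1 from by omega]
  have e2 : ∑ i ∈ Finset.range j, w ^ (i + 1) / ((i + 1 : ℕ) : ℝ) ^ m
      = ∑ s ∈ Finset.Icc 1 j, w ^ s / ((s : ℕ) : ℝ) ^ m := by
    rw [show Finset.Icc 1 j = Finset.Ico 1 (j + 1) from by rw [Finset.Ico_add_one_right_eq_Icc],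
      Finset.sum_Ico_eq_sum_range]
    apply Finset.sum_congr (by congr 1)
    intro i _
    rw [show 1 + i = i + 1 from by omega]
  rw [e1, Li]
  have : (fun n : ℕ => w ^ (n + j + 1) / ((n + j + 1 : ℕ) : ℝ) ^ m)
      = fun n : ℕ => w ^ ((n + j) + 1) / (((n + j) + 1 : ℕ) : ℝ) ^ m := rfl
  rw [this]
  linarith [key, e2]

lemma Li_one_eq {w : ℝ} (h0 : 0 ≤ w) (h1 : w < 1) : Li 1 w = -Real.log (1 - w) := by
  rw [Li, ← (Real.hasSum_pow_div_log_of_abs_lt_one (by rw [abs_of_nonneg h0]; exact h1)).tsum_eq]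
  apply tsum_congr; intro t
  rw [pow_one]; push_cast; ring_nf

/-- `f₂*(z,ν) = α* Li₃(1/z) + β* Li₂(1/z) - γ* log(1 - 1/z) - φ*`, and the defining series
converges absolutely. -/
theorem f2_star_formula (Δ ν : ℕ) (hΔ : 1 < Δ) (hν : 1 ≤ ν)
    (R₀ : ℝ → ℝ)
    (hR : ∀ t : ℝ, R₀ t = ((ν * Δ).factorial : ℝ) / ((ν * Δ - ν).factorial : ℝ) *
      (∏ κ ∈ Finset.Icc (ν + 1) (ν * Δ), (t - (κ : ℝ))) *
      (∏ κ ∈ Finset.range (ν * Δ + 1), (t + (κ : ℝ))⁻¹))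
    (α β γ : ℕ → ℝ)
    (hα : ∀ k, α k = (-1 : ℝ) ^ (ν + ν * Δ + k) *
      ((ν * Δ).choose k : ℝ) ^ 3 * ((ν * Δ + k).choose (ν * Δ - ν) : ℝ) ^ 3)
    (hfrac : ∀ t : ℝ, (∀ k : ℕ, k ≤ ν * Δ → t ≠ -(k : ℝ)) →
      (R₀ t) ^ 3 = ∑ k ∈ Finset.range (ν * Δ + 1),
        (α k * ((t + (k : ℝ)) ^ 3)⁻¹ + β k * ((t + (k : ℝ)) ^ 2)⁻¹ + γ k * (t + (k : ℝ))⁻¹))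
    (z : ℝ) (hz : 1 < z)
    (f₂ : ℝ) (hf₂ : f₂ = (-z) ^ ν *
      ∑' n : ℕ, z ^ (-((ν + 1 + n : ℕ) : ℤ)) * (R₀ ((ν + 1 + n : ℕ) : ℝ)) ^ 3) :
    Summable (fun n : ℕ => |z ^ (-((ν + 1 + n : ℕ) : ℤ)) * (R₀ ((ν + 1 + n : ℕ) : ℝ)) ^ 3|) ∧
    f₂ = ((-z) ^ ν * ∑ k ∈ Finset.range (ν * Δ + 1), α k * z ^ k) * Li 3 (1 / z) +
        ((-z) ^ ν * ∑ k ∈ Finset.range (ν * Δ + 1), β k * z ^ k) * Li 2 (1 / z) -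
        ((-z) ^ ν * ∑ k ∈ Finset.range (ν * Δ + 1), γ k * z ^ k) * Real.log (1 - 1 / z) -
        (-z) ^ ν * ∑ k ∈ Finset.range (ν * Δ + 1), z ^ k *
          ∑ t ∈ Finset.Icc 1 (k + ν), z ^ (-(t : ℤ)) *
            (α k * ((t : ℝ) ^ 3)⁻¹ + β k * ((t : ℝ) ^ 2)⁻¹ + γ k * ((t : ℝ))⁻¹) := by
  have hz0 : (0:ℝ) < z := lt_trans one_pos hz
  set w : ℝ := z⁻¹ with hwdef
  have hw0 : 0 < w := inv_pos.mpr hz0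
  have hw1 : w < 1 := inv_lt_one_of_one_lt₀ hz
  have hzwk : ∀ k : ℕ, z ^ k * w ^ k = 1 := fun k => by
    rw [← mul_pow, mul_inv_cancel₀ (ne_of_gt hz0), one_pow]
  have hzpow : ∀ N : ℕ, z ^ (-(N : ℤ)) = w ^ N := fun N => by
    rw [zpow_neg, zpow_natCast, ← inv_pow]
  set F : ℕ → ℕ → ℝ := fun k n =>
    α k * z ^ k * (w ^ (ν + k + 1 + n) / ((ν + k + 1 + n : ℕ) : ℝ) ^ 3) +
    β k * z ^ k * (w ^ (ν + k + 1 + n) / ((ν + k + 1 + n : ℕ) : ℝ) ^ 2) +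
    γ k * z ^ k * (w ^ (ν + k + 1 + n) / ((ν + k + 1 + n : ℕ) : ℝ) ^ 1) with hFdef
  have hterm : ∀ n : ℕ, z ^ (-((ν + 1 + n : ℕ) : ℤ)) * (R₀ ((ν + 1 + n : ℕ) : ℝ)) ^ 3
      = ∑ k ∈ Finset.range (ν * Δ + 1), F k n := by
    intro n
    have hne : ∀ k : ℕ, k ≤ ν * Δ → ((ν + 1 + n : ℕ) : ℝ) ≠ -(k : ℝ) := by
      intro k _ h
      have h1 : (0:ℝ) < ((ν + 1 + n : ℕ) : ℝ) := by exact_mod_cast (by omega : 0 < ν + 1 + n)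
      rw [h] at h1
      have h2 : (0:ℝ) ≤ (k : ℝ) := Nat.cast_nonneg k
      linarith
    rw [hfrac _ hne, hzpow, Finset.mul_sum]
    apply Finset.sum_congr rfl
    intro k _
    have hcast : ((ν + 1 + n : ℕ) : ℝ) + (k : ℝ) = ((ν + k + 1 + n : ℕ) : ℝ) := by
      push_cast; ring
    rw [hcast]
    have e : ∀ m : ℕ, z ^ k * (w ^ (ν + k + 1 + n) / ((ν + k + 1 + n : ℕ) : ℝ) ^ m)
        = w ^ (ν + 1 + n) * (((ν + k + 1 + n : ℕ) : ℝ) ^ m)⁻¹ := by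
      intro m
      have hww : w ^ (ν + k + 1 + n) = w ^ k * w ^ (ν + 1 + n) := by
        rw [← pow_add]; congr 1; omega
      rw [div_eq_mul_inv, hww]
      calc z ^ k * (w ^ k * w ^ (ν + 1 + n) * (((ν + k + 1 + n : ℕ) : ℝ) ^ m)⁻¹)
          = (z ^ k * w ^ k) * (w ^ (ν + 1 + n) * (((ν + k + 1 + n : ℕ) : ℝ) ^ m)⁻¹) := by ring
        _ = w ^ (ν + 1 + n) * (((ν + k + 1 + n : ℕ) : ℝ) ^ m)⁻¹ := by rw [hzwk, one_mul]
    have e1 := e 1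
    rw [pow_one] at e1
    calc w ^ (ν + 1 + n) * (α k * (((ν + k + 1 + n : ℕ) : ℝ) ^ 3)⁻¹ +
            β k * (((ν + k + 1 + n : ℕ) : ℝ) ^ 2)⁻¹ + γ k * (((ν + k + 1 + n : ℕ) : ℝ))⁻¹)
        = α k * (w ^ (ν + 1 + n) * (((ν + k + 1 + n : ℕ) : ℝ) ^ 3)⁻¹) +
          β k * (w ^ (ν + 1 + n) * (((ν + k + 1 + n : ℕ) : ℝ) ^ 2)⁻¹) +
          γ k * (w ^ (ν + 1 + n) * (((ν + k + 1 + n : ℕ) : ℝ))⁻¹) := by ring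
      _ = α k * (z ^ k * (w ^ (ν + k + 1 + n) / ((ν + k + 1 + n : ℕ) : ℝ) ^ 3)) +
          β k * (z ^ k * (w ^ (ν + k + 1 + n) / ((ν + k + 1 + n : ℕ) : ℝ) ^ 2)) +
          γ k * (z ^ k * (w ^ (ν + k + 1 + n) / ((ν + k + 1 + n : ℕ) : ℝ) ^ 1)) := by
            rw [e 3, e 2, pow_one, e1]
      _ = F k n := by rw [hFdef]; ring
  have t3 : ∀ k : ℕ, Summable (fun n : ℕ =>
      w ^ (ν + k + 1 + n) / ((ν + k + 1 + n : ℕ) : ℝ) ^ 3) :=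
    fun k => tail_summable hw0.le hw1 3 (ν + k)
  have t2 : ∀ k : ℕ, Summable (fun n : ℕ =>
      w ^ (ν + k + 1 + n) / ((ν + k + 1 + n : ℕ) : ℝ) ^ 2) :=
    fun k => tail_summable hw0.le hw1 2 (ν + k)
  have t1 : ∀ k : ℕ, Summable (fun n : ℕ =>
      w ^ (ν + k + 1 + n) / ((ν + k + 1 + n : ℕ) : ℝ) ^ 1) :=
    fun k => tail_summable hw0.le hw1 1 (ν + k)
  have hFsum : ∀ k : ℕ, Summable (F k) := by
    intro k
    simp only [hFdef]
    exact (((t3 k).mul_left _).add ((t2 k).mul_left _)).add ((t1 k).mul_left _)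
  have hSsum : Summable (fun n : ℕ => ∑ k ∈ Finset.range (ν * Δ + 1), F k n) :=
    summable_sum (fun k _ => hFsum k)
  have horig : (fun n : ℕ => z ^ (-((ν + 1 + n : ℕ) : ℤ)) * (R₀ ((ν + 1 + n : ℕ) : ℝ)) ^ 3)
      = fun n => ∑ k ∈ Finset.range (ν * Δ + 1), F k n := funext hterm
  constructor
  · rw [show (fun n : ℕ => |z ^ (-((ν + 1 + n : ℕ) : ℤ)) * (R₀ ((ν + 1 + n : ℕ) : ℝ)) ^ 3|)
        = fun n => |∑ k ∈ Finset.range (ν * Δ + 1), F k n| from by funext n; rw [hterm n]]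
    exact hSsum.abs
  · have htsumF : ∀ k : ℕ, ∑' n : ℕ, F k n
        = α k * z ^ k * (Li 3 w - ∑ s ∈ Finset.Icc 1 (ν + k), w ^ s / ((s : ℕ) : ℝ) ^ 3)
        + β k * z ^ k * (Li 2 w - ∑ s ∈ Finset.Icc 1 (ν + k), w ^ s / ((s : ℕ) : ℝ) ^ 2)
        + γ k * z ^ k * (Li 1 w - ∑ s ∈ Finset.Icc 1 (ν + k), w ^ s / ((s : ℕ) : ℝ) ^ 1) := by
      intro k
      simp only [hFdef]
      rw [Summable.tsum_add (((t3 k).mul_left _).add ((t2 k).mul_left _)) ((t1 k).mul_left _),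
          Summable.tsum_add ((t3 k).mul_left _) ((t2 k).mul_left _),
          tsum_mul_left, tsum_mul_left, tsum_mul_left,
          tail_eq hw0.le hw1 3 (ν + k), tail_eq hw0.le hw1 2 (ν + k),
          tail_eq hw0.le hw1 1 (ν + k)]
    rw [hf₂, horig, Summable.tsum_finsetSum (fun k _ => hFsum k)]
    simp only [htsumF]
    rw [one_div, ← hwdef]
    simp only [hzpow]
    have hlog : Real.log (1 - w) = -Li 1 w := by rw [Li_one_eq hw0.le hw1]; ring
    rw [hlog]
    have key : (∑ k ∈ Finset.range (ν * Δ + 1),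
        (α k * z ^ k * (Li 3 w - ∑ s ∈ Finset.Icc 1 (ν + k), w ^ s / ((s : ℕ) : ℝ) ^ 3)
        + β k * z ^ k * (Li 2 w - ∑ s ∈ Finset.Icc 1 (ν + k), w ^ s / ((s : ℕ) : ℝ) ^ 2)
        + γ k * z ^ k * (Li 1 w - ∑ s ∈ Finset.Icc 1 (ν + k), w ^ s / ((s : ℕ) : ℝ) ^ 1)))
        = (∑ k ∈ Finset.range (ν * Δ + 1), α k * z ^ k) * Li 3 w
        + (∑ k ∈ Finset.range (ν * Δ + 1), β k * z ^ k) * Li 2 w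
        + (∑ k ∈ Finset.range (ν * Δ + 1), γ k * z ^ k) * Li 1 w
        - ∑ k ∈ Finset.range (ν * Δ + 1), z ^ k *
            ∑ t ∈ Finset.Icc 1 (k + ν), w ^ t *
              (α k * ((t : ℝ) ^ 3)⁻¹ + β k * ((t : ℝ) ^ 2)⁻¹ + γ k * ((t : ℝ))⁻¹) := by
      rw [Finset.sum_mul, Finset.sum_mul, Finset.sum_mul, ← Finset.sum_add_distrib,
        ← Finset.sum_add_distrib, ← Finset.sum_sub_distrib]
      apply Finset.sum_congr rfl
      intro k _
      have hQ : ∑ t ∈ Finset.Icc 1 (k + ν), w ^ t *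
            (α k * ((t : ℝ) ^ 3)⁻¹ + β k * ((t : ℝ) ^ 2)⁻¹ + γ k * ((t : ℝ))⁻¹)
          = α k * (∑ s ∈ Finset.Icc 1 (ν + k), w ^ s / ((s : ℕ) : ℝ) ^ 3)
          + β k * (∑ s ∈ Finset.Icc 1 (ν + k), w ^ s / ((s : ℕ) : ℝ) ^ 2)
          + γ k * (∑ s ∈ Finset.Icc 1 (ν + k), w ^ s / ((s : ℕ) : ℝ) ^ 1) := by
        rw [show k + ν = ν + k from by omega, Finset.mul_sum, Finset.mul_sum, Finset.mul_sum,
          ← Finset.sum_add_distrib, ← Finset.sum_add_distrib]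
        apply Finset.sum_congr rfl
        intro t _
        ring
      rw [hQ]
      ring
    rw [key]
    ring
end

section
/- Let $\Delta > 1$, $\nu \ge 1$ be integers and $R_0(t;\nu)$ as above with partial fraction coefficients $\alpha^*_{\nu,k}, \beta^*_{\nu,k}, \gamma^*_{\nu,k}$. For real $z > 1$ define $f_4^*(z,\nu) = -(-z)^{\nu}\sum_{t=\nu+1}^{\infty} z^{-t}\,\frac{d}{dt}R_0(t;\nu)^3$. Then $f_4^*(z,\nu) = 3\alpha^*(z;\nu)\,\mathrm{Li}_4(1/z) + 2\beta^*(z;\nu)\,\mathrm{Li}_3(1/z) + \gamma^*(z;\nu)\,\mathrm{Li}_2(1/z) - \psi^*(z;\nu)$, where $\alpha^*(z;\nu),\beta^*(z;\nu),\gamma^*(z;\nu)$ are as in the decomposition $R_0^3 = \sum_k \alpha^*_{\nu,k}(t+k)^{-3}+\beta^*_{\nu,k}(t+k)^{-2}+\gamma^*_{\nu,k}(t+k)^{-1}$ multiplied by $(-z)^\nu z^k$ and summed, and $\psi^*(z;\nu) = (-z)^{\nu}\sum_{k=0}^{\nu\Delta}z^k\sum_{t=1}^{k+\nu}z^{-t}\big(3\alpha^*_{\nu,k}t^{-4}+2\beta^*_{\nu,k}t^{-3}+\gamma^*_{\nu,k}t^{-2}\big)$.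 -/
lemma summable_aux {w : ℝ} (hw : 0 < w) (hw1 : w < 1) (m : ℕ) :
    Summable (fun i : ℕ => w ^ (i + 1) / ((i + 1 : ℕ) : ℝ) ^ m) := by
  apply Summable.of_nonneg_of_le (fun i => by positivity) (fun i => ?_)
    (summable_geometric_of_lt_one hw.le hw1)
  have h1 : (1:ℝ) ≤ ((i + 1 : ℕ) : ℝ) ^ m :=
    one_le_pow₀ (by exact_mod_cast Nat.one_le_iff_ne_zero.mpr (Nat.succ_ne_zero i))
  calc w ^ (i+1) / ((i+1:ℕ):ℝ) ^ m ≤ w ^ (i+1) := div_le_self (by positivity) h1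
    _ ≤ w ^ i := pow_le_pow_of_le_one hw.le hw1.le (Nat.le_succ i)

lemma deriv_term (c : ℝ) (m : ℕ) {t : ℝ} (h : t + c ≠ 0) :
    HasDerivAt (fun s : ℝ => ((s + c) ^ (m+1))⁻¹) (-((m:ℝ)+1) * ((t + c) ^ (m+2))⁻¹) t := by
  have h1 : HasDerivAt (fun s : ℝ => s + c) 1 t := (hasDerivAt_id t).add_const c
  have h2 := h1.pow (m+1)
  have h3 := h2.inv (pow_ne_zero _ h)
  refine h3.congr_deriv ?_
  simp only [Pi.pow_apply, Nat.add_sub_cancel]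
  push_cast
  field_simp
  ring

lemma deriv_g (N : ℕ) (α β γ : ℕ → ℝ) {t : ℝ} (ht : 0 < t) :
    HasDerivAt (fun s : ℝ => ∑ k ∈ Finset.range (N+1),
      (α k * ((s + (k:ℝ)) ^ 3)⁻¹ + β k * ((s + (k:ℝ)) ^ 2)⁻¹ + γ k * (s + (k:ℝ))⁻¹))
      (∑ k ∈ Finset.range (N+1),
        -(3*α k * ((t + (k:ℝ)) ^ 4)⁻¹ + 2*β k * ((t + (k:ℝ)) ^ 3)⁻¹
          + γ k * ((t + (k:ℝ)) ^ 2)⁻¹)) t := by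
  apply HasDerivAt.fun_sum
  intro k _
  have hk : t + (k:ℝ) ≠ 0 := by positivity
  have h3 := (deriv_term (k:ℝ) 2 hk).const_mul (α k)
  have h2 := (deriv_term (k:ℝ) 1 hk).const_mul (β k)
  have h1 := (deriv_term (k:ℝ) 0 hk).const_mul (γ k)
  have hsum := (h3.add h2).add h1
  norm_num only [pow_one] at hsum
  convert hsum using 1
  · rfl
  ring


/-- `f₄*(z,ν) = 3α* Li₄(1/z) + 2β* Li₃(1/z) + γ* Li₂(1/z) - ψ*`. -/
theorem f4_star_formula (Δ ν : ℕ) (hΔ : 1 < Δ) (hν : 1 ≤ ν)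
    (R₀ : ℝ → ℝ)
    (hR : ∀ t : ℝ, R₀ t = ((ν * Δ).factorial : ℝ) / ((ν * Δ - ν).factorial : ℝ) *
      (∏ κ ∈ Finset.Icc (ν + 1) (ν * Δ), (t - (κ : ℝ))) *
      (∏ κ ∈ Finset.range (ν * Δ + 1), (t + (κ : ℝ))⁻¹))
    (α β γ : ℕ → ℝ)
    (hfrac : ∀ t : ℝ, (∀ k : ℕ, k ≤ ν * Δ → t ≠ -(k : ℝ)) →
      (R₀ t) ^ 3 = ∑ k ∈ Finset.range (ν * Δ + 1),
        (α k * ((t + (k : ℝ)) ^ 3)⁻¹ + β k * ((t + (k : ℝ)) ^ 2)⁻¹ + γ k * (t + (k : ℝ))⁻¹))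
    (z : ℝ) (hz : 1 < z)
    (f₄ : ℝ) (hf₄ : f₄ = -((-z) ^ ν *
      ∑' n : ℕ, z ^ (-((ν + 1 + n : ℕ) : ℤ)) *
        deriv (fun s : ℝ => (R₀ s) ^ 3) ((ν + 1 + n : ℕ) : ℝ))) :
    f₄ = 3 * ((-z) ^ ν * ∑ k ∈ Finset.range (ν * Δ + 1), α k * z ^ k) * Li 4 (1 / z) +
        2 * ((-z) ^ ν * ∑ k ∈ Finset.range (ν * Δ + 1), β k * z ^ k) * Li 3 (1 / z) +
        ((-z) ^ ν * ∑ k ∈ Finset.range (ν * Δ + 1), γ k * z ^ k) * Li 2 (1 / z) -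
        (-z) ^ ν * ∑ k ∈ Finset.range (ν * Δ + 1), z ^ k *
          ∑ t ∈ Finset.Icc 1 (k + ν), z ^ (-(t : ℤ)) *
            (3 * α k * ((t : ℝ) ^ 4)⁻¹ + 2 * β k * ((t : ℝ) ^ 3)⁻¹ + γ k * ((t : ℝ) ^ 2)⁻¹) := by
  have hz0 : (0:ℝ) < z := lt_trans one_pos hz
  set N := ν * Δ with hN
  set w := z⁻¹ with hw_def
  have hw : 0 < w := inv_pos.mpr hz0
  have hw1 : w < 1 := inv_lt_one_of_one_lt₀ hz
  have hzw : z * w = 1 := mul_inv_cancel₀ hz0.ne'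
  set F : ℕ → ℕ → ℝ := fun m i => w ^ (i + 1) / ((i + 1 : ℕ) : ℝ) ^ m with hF
  set P : ℕ → ℕ → ℝ := fun m c => ∑ i ∈ Finset.range c, F m i with hP
  set g : ℕ → ℕ → ℝ := fun k n =>
    z^k*(3*α k) * F 4 (n+(ν+k)) + z^k*(2*β k) * F 3 (n+(ν+k)) + z^k*(γ k) * F 2 (n+(ν+k))
    with hg_def
  have hLi : ∀ m, Li m w = ∑' i, F m i := fun m => rfl
  -- derivative computation
  have hderiv : ∀ n : ℕ, deriv (fun s : ℝ => (R₀ s)^3) ((ν+1+n : ℕ) : ℝ)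
      = ∑ k ∈ Finset.range (N+1),
        -(3*α k * ((((ν+1+n:ℕ):ℝ) + (k:ℝ)) ^ 4)⁻¹ + 2*β k * ((((ν+1+n:ℕ):ℝ) + (k:ℝ)) ^ 3)⁻¹
          + γ k * ((((ν+1+n:ℕ):ℝ) + (k:ℝ)) ^ 2)⁻¹) := by
    intro n
    have ht : (0:ℝ) < ((ν+1+n:ℕ):ℝ) := by
      have : 0 < ν+1+n := by omega
      exact_mod_cast this
    have heq : (fun s : ℝ => (R₀ s)^3) =ᶠ[nhds ((ν+1+n:ℕ):ℝ)]
        (fun s => ∑ k ∈ Finset.range (N+1),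
          (α k * ((s + (k:ℝ)) ^ 3)⁻¹ + β k * ((s + (k:ℝ)) ^ 2)⁻¹ + γ k * (s + (k:ℝ))⁻¹)) := by
      filter_upwards [isOpen_Ioi.mem_nhds ht] with s hs
      refine hfrac s (fun k hk hcon => ?_)
      have h1 : (0:ℝ) ≤ (k:ℝ) := Nat.cast_nonneg k
      have h2 : (0:ℝ) < s := hs
      rw [hcon] at h2; linarith
    rw [heq.deriv_eq, (deriv_g N α β γ ht).deriv]
  -- per-term rewrite
  have hterm : ∀ n : ℕ, z ^ (-((ν+1+n:ℕ):ℤ)) * deriv (fun s : ℝ => (R₀ s)^3) ((ν+1+n:ℕ):ℝ)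
      = -(∑ k ∈ Finset.range (N+1), g k n) := by
    intro n
    rw [hderiv n, zpow_neg, zpow_natCast, ← inv_pow, ← hw_def, Finset.mul_sum,
       ← Finset.sum_neg_distrib]
    refine Finset.sum_congr rfl (fun k _ => ?_)
    rw [mul_neg, neg_inj]
    have hXX : ((n+(ν+k)+1:ℕ):ℝ) = ((ν+1+n:ℕ):ℝ) + (k:ℝ) := by push_cast; ring
    have hzk : z^k * w^k = 1 := by rw [← mul_pow, hzw, one_pow]
    simp only [hg_def, hF, hXX]
    rw [show n+(ν+k)+1 = (ν+1+n)+k from by omega, pow_add]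
    set X := ((ν+1+n:ℕ):ℝ) + (k:ℝ) with hX
    linear_combination (-(w^(ν+1+n) * (3*α k * (X^4)⁻¹ + 2*β k*(X^3)⁻¹ + γ k*(X^2)⁻¹))) * hzk
  -- summability
  have hs : ∀ (m : ℕ) (k : ℕ) (c : ℝ), Summable (fun n : ℕ => c * F m (n+(ν+k))) :=
    fun m k c => ((summable_nat_add_iff (ν+k)).mpr (summable_aux hw hw1 m)).mul_left c
  have hsum : ∀ k, Summable (g k) := fun k =>
    ((hs 4 k _).add (hs 3 k _)).add (hs 2 k _)
  -- tail sums
  have htail : ∀ (m c : ℕ), ∑' n : ℕ, F m (n + c) = Li m w - ∑ i ∈ Finset.range c, F m i := by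
    intro m c
    have h := Summable.sum_add_tsum_nat_add c (summable_aux hw hw1 m)
    rw [hLi m]
    linarith [h]
  have hgk : ∀ k, ∑' n, g k n
      = z^k*(3*α k)*(Li 4 w - P 4 (ν+k)) + z^k*(2*β k)*(Li 3 w - P 3 (ν+k))
        + z^k*(γ k)*(Li 2 w - P 2 (ν+k)) := by
    intro k
    calc ∑' n, g k n
        = ∑' n, (z^k*(3*α k) * F 4 (n+(ν+k)) + z^k*(2*β k) * F 3 (n+(ν+k))
            + z^k*(γ k) * F 2 (n+(ν+k))) := rfl
      _ = _ := by
          rw [Summable.tsum_add ((hs 4 k _).add (hs 3 k _)) (hs 2 k _), Summable.tsum_add (hs 4 k _) (hs 3 k _),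
            tsum_mul_left, tsum_mul_left, tsum_mul_left, htail, htail, htail]
  -- main identity
  have hmain : f₄ = (-z)^ν * ∑ k ∈ Finset.range (N+1), ∑' n, g k n := by
    rw [hf₄, tsum_congr hterm, tsum_neg, Summable.tsum_finsetSum (fun k _ => hsum k)]
    ring
  -- partial sums
  have hQ : ∀ k : ℕ, (∑ t ∈ Finset.Icc 1 (k+ν), z ^ (-(t:ℤ)) *
        (3 * α k * ((t:ℝ)^4)⁻¹ + 2 * β k * ((t:ℝ)^3)⁻¹ + γ k * ((t:ℝ)^2)⁻¹))
      = 3*α k * P 4 (ν+k) + 2*β k * P 3 (ν+k) + γ k * P 2 (ν+k) := by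
    intro k
    rw [← Finset.Ico_add_one_right_eq_Icc, Finset.sum_Ico_eq_sum_range, show k+ν+1-1 = ν+k from by omega]
    simp only [hP, Finset.mul_sum, ← Finset.sum_add_distrib]
    refine Finset.sum_congr rfl (fun i _ => ?_)
    rw [zpow_neg, zpow_natCast, ← inv_pow, ← hw_def]
    have h1 : ((1+i:ℕ):ℝ) = ((i+1:ℕ):ℝ) := by push_cast; ring
    have h2 : (1+i) = (i+1) := by omega
    simp only [hF, h1, h2, div_eq_mul_inv]
    ring
  rw [hmain, Finset.sum_congr rfl (fun k _ => hgk k),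
    show (1:ℝ)/z = w from (one_div z).trans hw_def.symm]
  have hlast : ∀ k ∈ Finset.range (N+1), z^k * (∑ t ∈ Finset.Icc 1 (k+ν), z ^ (-(t:ℤ)) *
        (3 * α k * ((t:ℝ)^4)⁻¹ + 2 * β k * ((t:ℝ)^3)⁻¹ + γ k * ((t:ℝ)^2)⁻¹))
      = z^k * (3*α k * P 4 (ν+k) + 2*β k * P 3 (ν+k) + γ k * P 2 (ν+k)) :=
    fun k _ => by rw [hQ k]
  rw [Finset.sum_congr rfl hlast]
  simp only [Finset.mul_sum, Finset.sum_mul]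
  rw [← Finset.sum_add_distrib, ← Finset.sum_add_distrib, ← Finset.sum_sub_distrib]
  refine Finset.sum_congr rfl (fun k _ => ?_)
  ring
end

section
/- Let $\Delta > 1$, $\nu \ge 1$ be integers and $R_0(t;\nu)$ as above. For real $z > 1$ define $f_6^*(z,\nu) = \tfrac{1}{2}(-z)^{\nu}\sum_{t=\nu+1}^{\infty} z^{-t}\,\frac{d^2}{dt^2}R_0(t;\nu)^3$. Then $f_6^*(z,\nu) = 6\alpha^*(z;\nu)\,\mathrm{Li}_5(1/z) + 3\beta^*(z;\nu)\,\mathrm{Li}_4(1/z) + \gamma^*(z;\nu)\,\mathrm{Li}_3(1/z) - \xi^*(z;\nu)$, where $\xi^*(z;\nu) = (-z)^{\nu}\sum_{k=0}^{\nu\Delta}z^k\sum_{t=1}^{k+\nu}z^{-t}\big(6\alpha^*_{\nu,k}t^{-5}+3\beta^*_{\nu,k}t^{-4}+\gamma^*_{\nu,k}t^{-3}\big)$. -/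
private lemma aux_hasDerivAt (N : ℕ) (a b c : ℕ → ℝ) (p q r : ℤ) (s : ℝ) (hs : 0 < s) :
    HasDerivAt (fun x : ℝ => ∑ k ∈ Finset.range N,
      (a k * (x + (k : ℝ)) ^ p + b k * (x + (k : ℝ)) ^ q + c k * (x + (k : ℝ)) ^ r))
      (∑ k ∈ Finset.range N,
      (a k * ((p : ℝ) * (s + (k : ℝ)) ^ (p - 1)) + b k * ((q : ℝ) * (s + (k : ℝ)) ^ (q - 1))
        + c k * ((r : ℝ) * (s + (k : ℝ)) ^ (r - 1)))) s := by
  apply HasDerivAt.fun_sum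
  intro k _
  have hpos : (0 : ℝ) < s + (k : ℝ) := by positivity
  have hne : s + (k : ℝ) ≠ 0 := ne_of_gt hpos
  have hx : HasDerivAt (fun x : ℝ => x + (k : ℝ)) 1 s := (hasDerivAt_id s).add_const _
  have h : ∀ m : ℤ, HasDerivAt (fun x : ℝ => (x + (k : ℝ)) ^ m)
      ((m : ℝ) * (s + (k : ℝ)) ^ (m - 1)) s := by
    intro m
    have := (hasDerivAt_zpow m (s + (k : ℝ)) (Or.inl hne)).comp s hx
    simpa [Function.comp_def] using this
  exact (((h p).const_mul (a k)).add ((h q).const_mul (b k))).add ((h r).const_mul (c k))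

/-- `f₆*(z,ν) = 6α* Li₅(1/z) + 3β* Li₄(1/z) + γ* Li₃(1/z) - ξ*`. -/
theorem f6_star_formula (Δ ν : ℕ) (hΔ : 1 < Δ) (hν : 1 ≤ ν)
    (R₀ : ℝ → ℝ)
    (hR : ∀ t : ℝ, R₀ t = ((ν * Δ).factorial : ℝ) / ((ν * Δ - ν).factorial : ℝ) *
      (∏ κ ∈ Finset.Icc (ν + 1) (ν * Δ), (t - (κ : ℝ))) *
      (∏ κ ∈ Finset.range (ν * Δ + 1), (t + (κ : ℝ))⁻¹))
    (α β γ : ℕ → ℝ)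
    (hfrac : ∀ t : ℝ, (∀ k : ℕ, k ≤ ν * Δ → t ≠ -(k : ℝ)) →
      (R₀ t) ^ 3 = ∑ k ∈ Finset.range (ν * Δ + 1),
        (α k * ((t + (k : ℝ)) ^ 3)⁻¹ + β k * ((t + (k : ℝ)) ^ 2)⁻¹ + γ k * (t + (k : ℝ))⁻¹))
    (z : ℝ) (hz : 1 < z)
    (f₆ : ℝ) (hf₆ : f₆ = (1 / 2) * (-z) ^ ν *
      ∑' n : ℕ, z ^ (-((ν + 1 + n : ℕ) : ℤ)) *
        deriv (deriv (fun s : ℝ => (R₀ s) ^ 3)) ((ν + 1 + n : ℕ) : ℝ)) :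
    f₆ = 6 * ((-z) ^ ν * ∑ k ∈ Finset.range (ν * Δ + 1), α k * z ^ k) * Li 5 (1 / z) +
        3 * ((-z) ^ ν * ∑ k ∈ Finset.range (ν * Δ + 1), β k * z ^ k) * Li 4 (1 / z) +
        ((-z) ^ ν * ∑ k ∈ Finset.range (ν * Δ + 1), γ k * z ^ k) * Li 3 (1 / z) -
        (-z) ^ ν * ∑ k ∈ Finset.range (ν * Δ + 1), z ^ k *
          ∑ t ∈ Finset.Icc 1 (k + ν), z ^ (-(t : ℤ)) *
            (6 * α k * ((t : ℝ) ^ 5)⁻¹ + 3 * β k * ((t : ℝ) ^ 4)⁻¹ + γ k * ((t : ℝ) ^ 3)⁻¹) := by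
  have hz0 : (0 : ℝ) < z := lt_trans one_pos hz
  have hz0' : z ≠ 0 := ne_of_gt hz0
  set N := ν * Δ + 1 with hN
  -- the three stages of the partial-fraction function
  set g₀ : ℝ → ℝ := fun x => ∑ k ∈ Finset.range N,
    (α k * (x + (k : ℝ)) ^ (-3 : ℤ) + β k * (x + (k : ℝ)) ^ (-2 : ℤ)
      + γ k * (x + (k : ℝ)) ^ (-1 : ℤ)) with hg₀
  set g₁ : ℝ → ℝ := fun x => ∑ k ∈ Finset.range N,
    ((-3 * α k) * (x + (k : ℝ)) ^ (-4 : ℤ) + (-2 * β k) * (x + (k : ℝ)) ^ (-3 : ℤ)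
      + (-1 * γ k) * (x + (k : ℝ)) ^ (-2 : ℤ)) with hg₁
  set g₂ : ℝ → ℝ := fun x => ∑ k ∈ Finset.range N,
    ((12 * α k) * (x + (k : ℝ)) ^ (-5 : ℤ) + (6 * β k) * (x + (k : ℝ)) ^ (-4 : ℤ)
      + (2 * γ k) * (x + (k : ℝ)) ^ (-3 : ℤ)) with hg₂
  -- second derivative of R₀³ at positive points
  have hd : ∀ t : ℝ, 0 < t → deriv (deriv (fun s : ℝ => (R₀ s) ^ 3)) t = g₂ t := by
    intro t ht
    have hmem : Set.Ioi (0 : ℝ) ∈ nhds t := isOpen_Ioi.mem_nhds ht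
    have h0 : (fun s : ℝ => (R₀ s) ^ 3) =ᶠ[nhds t] g₀ := by
      filter_upwards [hmem] with s hs
      have hs' : (0 : ℝ) < s := hs
      rw [hfrac s]
      · apply Finset.sum_congr rfl
        intro k _
        have : ∀ m : ℕ, (s + (k : ℝ)) ^ (-(m : ℤ)) = ((s + (k : ℝ)) ^ m)⁻¹ := by
          intro m; rw [zpow_neg, zpow_natCast]
        rw [show ((-3 : ℤ)) = -(3 : ℕ) by norm_num, show ((-2 : ℤ)) = -(2 : ℕ) by norm_num,
          show ((-1 : ℤ)) = -(1 : ℕ) by norm_num, this, this, this, pow_one]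
      · intro k _
        have : (0 : ℝ) ≤ (k : ℝ) := Nat.cast_nonneg k
        intro h; rw [h] at hs'; linarith
    have hder1 : ∀ s : ℝ, 0 < s → deriv g₀ s = g₁ s := by
      intro s hs
      have := (aux_hasDerivAt N α β γ (-3) (-2) (-1) s hs).deriv
      rw [hg₀]
      rw [this, hg₁]
      apply Finset.sum_congr rfl
      intro k _
      norm_num
      ring
    have hder2 : ∀ s : ℝ, 0 < s → deriv g₁ s = g₂ s := by
      intro s hs
      have := (aux_hasDerivAt N (fun k => -3 * α k) (fun k => -2 * β k) (fun k => -1 * γ k)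
        (-4) (-3) (-2) s hs).deriv
      rw [hg₁]
      rw [this, hg₂]
      apply Finset.sum_congr rfl
      intro k _
      norm_num
      ring
    have e1 : deriv (fun s : ℝ => (R₀ s) ^ 3) =ᶠ[nhds t] g₁ := by
      refine (h0.deriv).trans ?_
      filter_upwards [hmem] with s hs
      exact hder1 s hs
    rw [e1.deriv_eq, hder2 t ht]
  -- summability of the basic geometric-type series
  have hinvz : (1 / z) < 1 := by rw [div_lt_one hz0]; exact hz
  have hinvz0 : (0 : ℝ) < 1 / z := by positivity
  have hbase : ∀ m : ℕ, Summable (fun i : ℕ => (1 / z) ^ (i + 1) * (((i + 1 : ℕ) : ℝ) ^ m)⁻¹) := by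
    intro m
    apply Summable.of_nonneg_of_le (fun i => by positivity)
      (f := fun i : ℕ => (1 / z) ^ (i + 1))
    · intro i
      have h1 : (1 : ℝ) ≤ ((i + 1 : ℕ) : ℝ) ^ m := by
        exact_mod_cast Nat.one_le_pow m (i + 1) (Nat.succ_pos i)
      exact mul_le_of_le_one_right (by positivity) (inv_le_one_of_one_le₀ h1)
    · simpa [pow_succ] using
        (summable_geometric_of_lt_one (le_of_lt hinvz0) hinvz).mul_right (1 / z)
  -- partial sums appearing in ξ*
  set S : ℕ → ℕ → ℝ := fun m k => ∑ t ∈ Finset.Icc 1 (k + ν),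
    z ^ (-(t : ℤ)) * (((t : ℕ) : ℝ) ^ m)⁻¹ with hS
  -- the key shifted-series identity
  have key : ∀ m k : ℕ,
      Summable (fun n : ℕ => z ^ (-((ν + 1 + n : ℕ) : ℤ)) *
        ((((ν + 1 + n : ℕ) : ℝ) + (k : ℝ)) ^ m)⁻¹) ∧
      ∑' n : ℕ, z ^ (-((ν + 1 + n : ℕ) : ℤ)) * ((((ν + 1 + n : ℕ) : ℝ) + (k : ℝ)) ^ m)⁻¹
        = z ^ k * (Li m (1 / z) - S m k) := by
    intro m k
    set f : ℕ → ℝ := fun i => (1 / z) ^ (i + 1) * (((i + 1 : ℕ) : ℝ) ^ m)⁻¹ with hf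
    have hfn : (fun n : ℕ => z ^ (-((ν + 1 + n : ℕ) : ℤ)) *
        ((((ν + 1 + n : ℕ) : ℝ) + (k : ℝ)) ^ m)⁻¹)
        = fun n : ℕ => z ^ k * f (n + (ν + k)) := by
      funext n
      have e1 : (((ν + 1 + n : ℕ) : ℝ) + (k : ℝ)) = (((n + (ν + k)) + 1 : ℕ) : ℝ) := by
        push_cast; ring
      have e2 : z ^ (-((ν + 1 + n : ℕ) : ℤ)) = z ^ k * (1 / z) ^ ((n + (ν + k)) + 1) := by
        rw [one_div, inv_pow, ← zpow_natCast z k, ← zpow_natCast z ((n + (ν + k)) + 1),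
          ← zpow_neg, ← zpow_add₀ hz0']
        congr 1
        push_cast; ring
      rw [hf]
      simp only []
      rw [e1, e2]
      ring
    have hsummable : Summable (fun n : ℕ => z ^ (-((ν + 1 + n : ℕ) : ℤ)) *
        ((((ν + 1 + n : ℕ) : ℝ) + (k : ℝ)) ^ m)⁻¹) := by
      rw [hfn]
      exact ((summable_nat_add_iff (ν + k)).2 (hbase m)).mul_left _
    refine ⟨hsummable, ?_⟩
    rw [hfn, tsum_mul_left]
    congr 1
    have htot := (hbase m).sum_add_tsum_nat_add (ν + k)
    have hLi : ∑' i : ℕ, f i = Li m (1 / z) := by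
      rw [Li]
      apply tsum_congr
      intro t
      simp [hf, div_eq_mul_inv]
    have hIcc : S m k = ∑ i ∈ Finset.range (ν + k), f i := by
      rw [hS]
      simp only []
      rw [show Finset.Icc 1 (k + ν) = Finset.Ico 1 (k + ν + 1) from (Finset.Ico_add_one_right_eq_Icc 1 _),
        Finset.sum_Ico_eq_sum_range]
      simp only [Nat.add_sub_cancel]
      rw [show k + ν = ν + k from add_comm k ν]
      apply Finset.sum_congr rfl
      intro i _
      have e3 : z ^ (-((1 + i : ℕ) : ℤ)) = (1 / z) ^ (i + 1) := by
        rw [one_div, inv_pow, ← zpow_natCast z (i + 1), ← zpow_neg]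
        congr 1
        push_cast; ring
      rw [hf]
      simp only []
      rw [show ((1 + i : ℕ) : ℤ) = ((1 + i : ℕ) : ℤ) from rfl]
      rw [e3, show ((1 + i : ℕ) : ℝ) = ((i + 1 : ℕ) : ℝ) by push_cast; ring]
    rw [hLi] at htot
    rw [hIcc]
    linarith [htot]
  -- the main computation
  have hmain : f₆ = 1 / 2 * (-z) ^ ν * ∑ k ∈ Finset.range N,
      ((12 * α k) * (z ^ k * (Li 5 (1 / z) - S 5 k))
        + (6 * β k) * (z ^ k * (Li 4 (1 / z) - S 4 k))
        + (2 * γ k) * (z ^ k * (Li 3 (1 / z) - S 3 k))) := by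
    rw [hf₆]
    congr 1
    calc ∑' n : ℕ, z ^ (-((ν + 1 + n : ℕ) : ℤ)) *
          deriv (deriv (fun s : ℝ => (R₀ s) ^ 3)) ((ν + 1 + n : ℕ) : ℝ)
        = ∑' n : ℕ, ∑ k ∈ Finset.range N,
            ((12 * α k) * (z ^ (-((ν + 1 + n : ℕ) : ℤ)) *
              ((((ν + 1 + n : ℕ) : ℝ) + (k : ℝ)) ^ 5)⁻¹)
            + (6 * β k) * (z ^ (-((ν + 1 + n : ℕ) : ℤ)) *
              ((((ν + 1 + n : ℕ) : ℝ) + (k : ℝ)) ^ 4)⁻¹)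
            + (2 * γ k) * (z ^ (-((ν + 1 + n : ℕ) : ℤ)) *
              ((((ν + 1 + n : ℕ) : ℝ) + (k : ℝ)) ^ 3)⁻¹)) := by
          apply tsum_congr
          intro n
          have hpos : (0 : ℝ) < ((ν + 1 + n : ℕ) : ℝ) := by
            exact_mod_cast Nat.pos_of_ne_zero (by omega)
          rw [hd _ hpos, hg₂]
          rw [Finset.mul_sum]
          apply Finset.sum_congr rfl
          intro k _
          have hz5 : ∀ x : ℝ, ∀ m : ℕ, x ^ (-(m : ℤ)) = (x ^ m)⁻¹ := by
            intro x m; rw [zpow_neg, zpow_natCast]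
          simp only [show ((-5 : ℤ)) = -((5 : ℕ) : ℤ) by norm_num,
            show ((-4 : ℤ)) = -((4 : ℕ) : ℤ) by norm_num,
            show ((-3 : ℤ)) = -((3 : ℕ) : ℤ) by norm_num, hz5]
          ring
      _ = ∑ k ∈ Finset.range N, ∑' n : ℕ,
            ((12 * α k) * (z ^ (-((ν + 1 + n : ℕ) : ℤ)) *
              ((((ν + 1 + n : ℕ) : ℝ) + (k : ℝ)) ^ 5)⁻¹)
            + (6 * β k) * (z ^ (-((ν + 1 + n : ℕ) : ℤ)) *
              ((((ν + 1 + n : ℕ) : ℝ) + (k : ℝ)) ^ 4)⁻¹)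
            + (2 * γ k) * (z ^ (-((ν + 1 + n : ℕ) : ℤ)) *
              ((((ν + 1 + n : ℕ) : ℝ) + (k : ℝ)) ^ 3)⁻¹)) := by
          apply Summable.tsum_finsetSum
          intro k _
          exact (((key 5 k).1.mul_left _).add ((key 4 k).1.mul_left _)).add
            ((key 3 k).1.mul_left _)
      _ = ∑ k ∈ Finset.range N,
            ((12 * α k) * (z ^ k * (Li 5 (1 / z) - S 5 k))
              + (6 * β k) * (z ^ k * (Li 4 (1 / z) - S 4 k))
              + (2 * γ k) * (z ^ k * (Li 3 (1 / z) - S 3 k))) := by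
          apply Finset.sum_congr rfl
          intro k _
          rw [Summable.tsum_add (((key 5 k).1.mul_left _).add ((key 4 k).1.mul_left _))
              ((key 3 k).1.mul_left _),
            Summable.tsum_add ((key 5 k).1.mul_left _) ((key 4 k).1.mul_left _),
            tsum_mul_left, tsum_mul_left, tsum_mul_left,
            (key 5 k).2, (key 4 k).2, (key 3 k).2]
  -- rewrite the ξ* inner sums via S
  have hxi : ∀ k : ℕ, ∑ t ∈ Finset.Icc 1 (k + ν), z ^ (-(t : ℤ)) *
      (6 * α k * ((t : ℝ) ^ 5)⁻¹ + 3 * β k * ((t : ℝ) ^ 4)⁻¹ + γ k * ((t : ℝ) ^ 3)⁻¹)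
      = 6 * α k * S 5 k + 3 * β k * S 4 k + γ k * S 3 k := by
    intro k
    rw [hS]
    simp only []
    rw [Finset.mul_sum, Finset.mul_sum, Finset.mul_sum, ← Finset.sum_add_distrib,
      ← Finset.sum_add_distrib]
    apply Finset.sum_congr rfl
    intro t _
    ring
  rw [hmain]
  rw [show (∑ k ∈ Finset.range N, z ^ k * ∑ t ∈ Finset.Icc 1 (k + ν), z ^ (-(t : ℤ)) *
      (6 * α k * ((t : ℝ) ^ 5)⁻¹ + 3 * β k * ((t : ℝ) ^ 4)⁻¹ + γ k * ((t : ℝ) ^ 3)⁻¹))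
      = ∑ k ∈ Finset.range N, z ^ k *
        (6 * α k * S 5 k + 3 * β k * S 4 k + γ k * S 3 k) from
    Finset.sum_congr rfl fun k _ => by rw [hxi k]]
  simp only [Finset.mul_sum, Finset.sum_mul]
  rw [← Finset.sum_add_distrib, ← Finset.sum_add_distrib, ← Finset.sum_sub_distrib]
  apply Finset.sum_congr rfl
  intro k _
  ring
end
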